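/- Let μ be a subprobability on [0,1/2]×[1/2,1] with uniform marginals such that I₂(μ) := ∫ 1[x₁<x₂<y₁<y₂] dμ(x₁,y₁)dμ(x₂,y₂) = 0. Then μ = Ω, where Ω is the pushforward of the Lebesgue measure on [0,1/2] under x ↦ (x, 1−x); equivalently, μ([0,a]×[1−b,1]) = min(a,b) for all a,b ∈ [0,1/2]. -/
import Mathlib


open MeasureTheory Set

/-- `Ω`, the uniform measure of total mass 1/2 on the segment `{(x,1−x) : x ∈ [0,1/2]}`:
the pushforward of Lebesgue measure on `[0,1/2]` by `x ↦ (x, 1−x)`. -/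
noncomputable def OmegaMeas : Measure (ℝ × ℝ) :=
  Measure.map (fun x : ℝ => (x, 1 - x)) (volume.restrict (Set.Icc (0 : ℝ) (1 / 2)))

/-- if `μ` is a subprobability on `[0,1/2]×[1/2,1]` with uniform marginals
and `I₂(μ) = 0`, then `μ = Ω`; equivalently `μ([0,a]×[1−b,1]) = min(a,b)`. -/
theorem stmt18 (μ : Measure (ℝ × ℝ))
    (hsub : μ Set.univ ≤ 1)
    (hsupp : μ ((Set.Icc (0 : ℝ) (1 / 2) ×ˢ Set.Icc (1 / 2 : ℝ) 1)ᶜ) = 0)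
    (hx : ∀ a b : ℝ, 0 ≤ a → a ≤ b → b ≤ 1 / 2 →
      μ {p : ℝ × ℝ | a ≤ p.1 ∧ p.1 ≤ b} = ENNReal.ofReal (b - a))
    (hy : ∀ a b : ℝ, 1 / 2 ≤ a → a ≤ b → b ≤ 1 →
      μ {p : ℝ × ℝ | a ≤ p.2 ∧ p.2 ≤ b} = ENNReal.ofReal (b - a))
    (hI2 : (μ.prod μ) {q : (ℝ × ℝ) × (ℝ × ℝ) |
      q.1.1 < q.2.1 ∧ q.2.1 < q.1.2 ∧ q.1.2 < q.2.2} = 0) :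
    μ = OmegaMeas ∧
      ∀ a b : ℝ, a ∈ Set.Icc (0 : ℝ) (1 / 2) → b ∈ Set.Icc (0 : ℝ) (1 / 2) →
        μ (Set.Icc 0 a ×ˢ Set.Icc (1 - b) 1) = ENNReal.ofReal (min a b) := by
  haveI hfin : IsFiniteMeasure μ := ⟨lt_of_le_of_lt hsub ENNReal.one_lt_top⟩
  set T : Set (ℝ × ℝ) := Set.Icc (0 : ℝ) (1 / 2) ×ˢ Set.Icc (1 / 2 : ℝ) 1 with hT
  have hinterT : ∀ s : Set (ℝ × ℝ), μ (s ∩ T) = μ s := fun s => measure_inter_conull hsupp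
  have hslice : ∀ c : ℝ, 1 / 2 ≤ c → c ≤ 1 → μ {p : ℝ × ℝ | p.2 = c} = 0 := by
    intro c h1 h2
    have h := hy c c h1 le_rfl h2
    rw [sub_self, ENNReal.ofReal_zero] at h
    exact measure_mono_null (fun p hp => show c ≤ p.2 ∧ p.2 ≤ c from ⟨le_of_eq hp.symm, le_of_eq hp⟩) h
  -- The key lemma: μ([0,a]×[1−b,1]) = min(a,b)
  have key : ∀ a b : ℝ, 0 ≤ a → a ≤ 1 / 2 → 0 ≤ b → b ≤ 1 / 2 →
      μ (Set.Icc 0 a ×ˢ Set.Icc (1 - b) 1) = ENNReal.ofReal (min a b) := by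
    intro a b ha0 ha hb0 hb
    have h1b : (1 : ℝ) / 2 ≤ 1 - b := by linarith
    have h1b1 : (1 : ℝ) - b ≤ 1 := by linarith
    have hxa := hx 0 a le_rfl ha0 ha
    rw [sub_zero] at hxa
    have hyb := hy (1 - b) 1 h1b h1b1 le_rfl
    rw [sub_sub_cancel] at hyb
    -- upper bounds
    have hub_a : μ (Set.Icc 0 a ×ˢ Set.Icc (1 - b) 1) ≤ ENNReal.ofReal a := by
      rw [← hxa]
      exact measure_mono fun p hp => ⟨hp.1.1, hp.1.2⟩
    have hub_b : μ (Set.Icc 0 a ×ˢ Set.Icc (1 - b) 1) ≤ ENNReal.ofReal b := by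
      rw [← hyb]
      exact measure_mono fun p hp => ⟨hp.2.1, hp.2.2⟩
    -- lower bound via I₂ = 0
    set S : Set (ℝ × ℝ) := {p | p.1 ≤ a ∧ 1 / 2 < p.2 ∧ p.2 < 1 - b} with hS
    set Q : Set (ℝ × ℝ) := {p | a < p.1 ∧ p.1 ≤ 1 / 2 ∧ 1 - b ≤ p.2} with hQ
    have hprod : μ S * μ Q = 0 := by
      rw [← Measure.prod_prod]
      refine measure_mono_null ?_ hI2
      rintro ⟨p, q⟩ ⟨hp, hq⟩
      exact ⟨lt_of_le_of_lt hp.1 hq.1, lt_of_le_of_lt hq.2.1 hp.2.1,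
        lt_of_lt_of_le hp.2.2 hq.2.2⟩
    have hlb : ENNReal.ofReal (min a b) ≤ μ (Set.Icc 0 a ×ˢ Set.Icc (1 - b) 1) := by
      rcases mul_eq_zero.mp hprod with hS0 | hQ0
      · -- then a ≤ F
        have hsub2 : {p : ℝ × ℝ | 0 ≤ p.1 ∧ p.1 ≤ a} ⊆
            (S ∪ Set.Icc 0 a ×ˢ Set.Icc (1 - b) 1) ∪ (Tᶜ ∪ {p : ℝ × ℝ | p.2 = 1 / 2}) := by
          intro p hp
          by_cases hpT : p ∈ T
          · by_cases hhalf : p.2 = 1 / 2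
            · exact Or.inr (Or.inr hhalf)
            · have hy1 : 1 / 2 < p.2 := lt_of_le_of_ne hpT.2.1 (Ne.symm hhalf)
              by_cases hyb2 : p.2 < 1 - b
              · exact Or.inl (Or.inl ⟨hp.2, hy1, hyb2⟩)
              · exact Or.inl (Or.inr ⟨⟨hp.1, hp.2⟩, ⟨le_of_not_gt hyb2, hpT.2.2⟩⟩)
          · exact Or.inr (Or.inl hpT)
        have hstep : ENNReal.ofReal a ≤ μ (Set.Icc 0 a ×ˢ Set.Icc (1 - b) 1) := by
          calc ENNReal.ofReal a = μ {p : ℝ × ℝ | 0 ≤ p.1 ∧ p.1 ≤ a} := hxa.symm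
            _ ≤ μ ((S ∪ Set.Icc 0 a ×ˢ Set.Icc (1 - b) 1) ∪
                (Tᶜ ∪ {p : ℝ × ℝ | p.2 = 1 / 2})) := measure_mono hsub2
            _ ≤ (μ S + μ (Set.Icc 0 a ×ˢ Set.Icc (1 - b) 1)) +
                (μ Tᶜ + μ {p : ℝ × ℝ | p.2 = 1 / 2}) :=
              le_trans (measure_union_le _ _)
                (add_le_add (measure_union_le _ _) (measure_union_le _ _))
            _ = μ (Set.Icc 0 a ×ˢ Set.Icc (1 - b) 1) := by
              rw [hS0, hsupp, hslice (1 / 2) le_rfl (by norm_num)]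
              simp
        exact le_trans (ENNReal.ofReal_le_ofReal (min_le_left a b)) hstep
      · -- then b ≤ F
        have hsub2 : {p : ℝ × ℝ | 1 - b ≤ p.2 ∧ p.2 ≤ 1} ⊆
            (Q ∪ Set.Icc 0 a ×ˢ Set.Icc (1 - b) 1) ∪ Tᶜ := by
          intro p hp
          by_cases hpT : p ∈ T
          · by_cases hpa : p.1 ≤ a
            · exact Or.inl (Or.inr ⟨⟨hpT.1.1, hpa⟩, ⟨hp.1, hp.2⟩⟩)
            · exact Or.inl (Or.inl ⟨lt_of_not_ge hpa, hpT.1.2, hp.1⟩)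
          · exact Or.inr hpT
        have hstep : ENNReal.ofReal b ≤ μ (Set.Icc 0 a ×ˢ Set.Icc (1 - b) 1) := by
          calc ENNReal.ofReal b = μ {p : ℝ × ℝ | 1 - b ≤ p.2 ∧ p.2 ≤ 1} := hyb.symm
            _ ≤ μ ((Q ∪ Set.Icc 0 a ×ˢ Set.Icc (1 - b) 1) ∪ Tᶜ) := measure_mono hsub2
            _ ≤ (μ Q + μ (Set.Icc 0 a ×ˢ Set.Icc (1 - b) 1)) + μ Tᶜ :=
              le_trans (measure_union_le _ _) (add_le_add (measure_union_le _ _) le_rfl)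
            _ = μ (Set.Icc 0 a ×ˢ Set.Icc (1 - b) 1) := by
              rw [hQ0, hsupp]; simp
        exact le_trans (ENNReal.ofReal_le_ofReal (min_le_right a b)) hstep
    refine le_antisymm ?_ hlb
    rcases le_total a b with h | h
    · rw [min_eq_left h]; exact hub_a
    · rw [min_eq_right h]; exact hub_b
  -- total masses
  have hμuniv : μ Set.univ = ENNReal.ofReal (1 / 2) := by
    have h := hx 0 (1 / 2) le_rfl (by norm_num) le_rfl
    rw [sub_zero] at h
    rw [← hinterT Set.univ, ← h, ← hinterT {p : ℝ × ℝ | 0 ≤ p.1 ∧ p.1 ≤ 1 / 2}]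
    congr 1
    ext p
    simp only [Set.univ_inter, Set.mem_inter_iff, Set.mem_setOf_eq, hT, Set.mem_prod,
      Set.mem_Icc]
    tauto
  have hfmeas : Measurable (fun x : ℝ => (x, 1 - x)) :=
    measurable_id.prodMk (measurable_const.sub measurable_id)
  have hΩ : ∀ s : Set (ℝ × ℝ), MeasurableSet s →
      OmegaMeas s = volume ((fun x : ℝ => (x, 1 - x)) ⁻¹' s ∩ Set.Icc 0 (1 / 2)) := by
    intro s hs
    rw [OmegaMeas, Measure.map_apply hfmeas hs, Measure.restrict_apply (hfmeas hs)]
  have hΩuniv : OmegaMeas Set.univ = ENNReal.ofReal (1 / 2) := by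
    rw [hΩ _ MeasurableSet.univ]
    simp [Real.volume_Icc]
  -- values on rectangles Iic a ×ˢ Iic b
  have hΩab : ∀ a b : ℝ, OmegaMeas (Set.Iic a ×ˢ Set.Iic b) =
      ENNReal.ofReal (min a (1 / 2) - max (1 - b) 0) := by
    intro a b
    rw [hΩ _ (measurableSet_Iic.prod measurableSet_Iic)]
    have e : (fun x : ℝ => (x, 1 - x)) ⁻¹' (Set.Iic a ×ˢ Set.Iic b) ∩ Set.Icc 0 (1 / 2) =
        Set.Icc (max (1 - b) 0) (min a (1 / 2)) := by
      ext x
      simp only [Set.mem_inter_iff, Set.mem_preimage, Set.mem_prod, Set.mem_Iic, Set.mem_Icc,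
        max_le_iff, le_min_iff]
      constructor
      · rintro ⟨⟨h1, h2⟩, h3, h4⟩; exact ⟨⟨by linarith, h3⟩, h1, h4⟩
      · rintro ⟨⟨h1, h2⟩, h3, h4⟩; exact ⟨⟨h3, by linarith⟩, h2, h4⟩
    rw [e, Real.volume_Icc]
  have hμab : ∀ a b : ℝ, μ (Set.Iic a ×ˢ Set.Iic b) =
      ENNReal.ofReal (min a (1 / 2) - max (1 - b) 0) := by
    intro a b
    rw [← hinterT (Set.Iic a ×ˢ Set.Iic b)]
    have e : Set.Iic a ×ˢ Set.Iic b ∩ T =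
        Set.Icc 0 (min a (1 / 2)) ×ˢ Set.Icc (1 / 2) (min b 1) := by
      rw [hT, Set.prod_inter_prod]
      congr 1
      · ext x
        simp only [Set.mem_inter_iff, Set.mem_Iic, Set.mem_Icc, le_min_iff]
        tauto
      · ext x
        simp only [Set.mem_inter_iff, Set.mem_Iic, Set.mem_Icc, le_min_iff]
        tauto
    rw [e]
    rcases lt_or_ge a 0 with ha | ha
    · have he : Set.Icc (0 : ℝ) (min a (1 / 2)) = ∅ := by
        apply Set.Icc_eq_empty
        intro hcon
        have := min_le_left a (1 / 2)
        linarith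
      rw [he, Set.empty_prod, measure_empty]
      symm
      rw [ENNReal.ofReal_eq_zero]
      have h1 := min_le_left a (1 / 2)
      have h2 := le_max_right (1 - b) 0
      linarith
    rcases lt_or_ge b (1 / 2) with hb | hb
    · have he : Set.Icc (1 / 2 : ℝ) (min b 1) = ∅ := by
        apply Set.Icc_eq_empty
        intro hcon
        have := min_le_left b 1
        linarith
      rw [he, Set.prod_empty, measure_empty]
      symm
      rw [ENNReal.ofReal_eq_zero]
      have h1 := min_le_right a (1 / 2)
      have h2 := le_max_left (1 - b) 0
      linarith
    · set a' := min a (1 / 2) with ha'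
      set b' := min b 1 with hb'
      have ha'0 : 0 ≤ a' := le_min ha (by norm_num)
      have ha'h : a' ≤ 1 / 2 := min_le_right _ _
      have hb'l : 1 / 2 ≤ b' := le_min hb (by norm_num)
      have hb'u : b' ≤ 1 := min_le_right _ _
      have hA : μ (Set.Icc 0 a' ×ˢ Set.Icc (1 / 2) 1) = ENNReal.ofReal a' := by
        have h := hx 0 a' le_rfl ha'0 ha'h
        rw [sub_zero] at h
        rw [← h, ← hinterT {p : ℝ × ℝ | 0 ≤ p.1 ∧ p.1 ≤ a'},
          ← hinterT (Set.Icc 0 a' ×ˢ Set.Icc (1 / 2) 1)]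
        congr 1
        ext p
        simp only [hT, Set.mem_inter_iff, Set.mem_prod, Set.mem_Icc, Set.mem_setOf_eq]
        tauto
      have h1b'0 : 0 ≤ 1 - b' := by linarith
      have h1b'h : (1 : ℝ) - b' ≤ 1 / 2 := by linarith
      have hB : μ (Set.Icc 0 a' ×ˢ Set.Icc b' 1) = ENNReal.ofReal (min a' (1 - b')) := by
        have h := key a' (1 - b') ha'0 ha'h h1b'0 h1b'h
        rw [sub_sub_cancel] at h
        exact h
      have hsl : μ (Set.Icc 0 a' ×ˢ Set.Icc b' b') = 0 :=
        measure_mono_null (fun p hp => le_antisymm hp.2.2 hp.2.1) (hslice b' hb'l hb'u)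
      have hmu := measure_union_add_inter (μ := μ) (Set.Icc 0 a' ×ˢ Set.Icc (1 / 2) b')
        ((measurableSet_Icc.prod measurableSet_Icc :
          MeasurableSet (Set.Icc 0 a' ×ˢ Set.Icc b' 1)))
      rw [← Set.prod_union, Set.Icc_union_Icc_eq_Icc hb'l hb'u, Set.prod_inter_prod,
        Set.inter_self] at hmu
      have hi : Set.Icc (1 / 2 : ℝ) b' ∩ Set.Icc b' 1 = Set.Icc b' b' := by
        ext x
        simp only [Set.mem_inter_iff, Set.mem_Icc]
        constructor
        · rintro ⟨h1, h2⟩; exact ⟨h2.1, h1.2⟩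
        · rintro ⟨h1, h2⟩; exact ⟨⟨le_trans hb'l h1, h2⟩, ⟨h1, le_trans h2 hb'u⟩⟩
      rw [hi, hsl, add_zero, hA, hB] at hmu
      -- hmu : ofReal a' = μ s + ofReal (min a' (1 - b'))
      have hμs : μ (Set.Icc 0 a' ×ˢ Set.Icc (1 / 2) b') =
          ENNReal.ofReal a' - ENNReal.ofReal (min a' (1 - b')) :=
        ENNReal.eq_sub_of_add_eq ENNReal.ofReal_ne_top hmu.symm
      rw [hμs, ← ENNReal.ofReal_sub _ (le_min ha'0 h1b'0)]
      have hmax : max (1 - b) 0 = 1 - b' := by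
        rcases le_total b 1 with h | h
        · rw [hb', min_eq_left h, max_eq_left (by linarith)]
        · rw [hb', min_eq_right h, max_eq_right (by linarith)]
          norm_num
      rw [hmax]
      rcases le_total (1 - b') a' with h | h
      · rw [min_eq_right h]
      · rw [min_eq_left h, sub_self, ENNReal.ofReal_zero]
        symm
        rw [ENNReal.ofReal_eq_zero]
        linarith
  -- conclude μ = OmegaMeas via π-system uniqueness
  have hgen : (inferInstance : MeasurableSpace (ℝ × ℝ)) =
      MeasurableSpace.generateFrom
        (Set.image2 (· ×ˢ ·) (Set.range Set.Iic) (Set.range (Set.Iic : ℝ → Set ℝ))) := by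
    refine (generateFrom_eq_prod ?_ ?_ ?_ ?_).symm
    · exact (borel_eq_generateFrom_Iic ℝ).symm.trans BorelSpace.measurable_eq.symm
    · exact (borel_eq_generateFrom_Iic ℝ).symm.trans BorelSpace.measurable_eq.symm
    · refine ⟨fun n => Set.Iic (n : ℝ), fun n => Set.mem_range_self _, ?_⟩
      ext x
      simp only [Set.mem_iUnion, Set.mem_Iic, Set.mem_univ, iff_true]
      exact exists_nat_ge x
    · refine ⟨fun n => Set.Iic (n : ℝ), fun n => Set.mem_range_self _, ?_⟩
      ext x
      simp only [Set.mem_iUnion, Set.mem_Iic, Set.mem_univ, iff_true]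
      exact exists_nat_ge x
  have hext : μ = OmegaMeas := by
    refine ext_of_generate_finite _ hgen (isPiSystem_Iic.prod isPiSystem_Iic) ?_
      (by rw [hμuniv, hΩuniv])
    rintro s ⟨s₁, ⟨a, rfl⟩, s₂, ⟨b, rfl⟩, rfl⟩
    rw [hμab, hΩab]
  exact ⟨hext, fun a b ha hb => key a b ha.1 ha.2 hb.1 hb.2⟩
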